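/- Let W ∈ ℂ[x₁,…,x_n] be non-degenerate quasi-homogeneous with weights qᵢ ∈ (0,1), assign xᵢ weight qᵢ and sᵢ weight 1−qᵢ. Then for each i there exists a nonzero quasi-homogeneous polynomial pᵢ(xᵢ) ∈ ℂ[s₁,…,s_n][xᵢ], monic up to a nonzero constant in xᵢ (its leading coefficient in xᵢ is a nonzero constant independent of s₁,…,s_n), such that whenever (u₁,…,u_n) ∈ ℂⁿ satisfies ∂W/∂x_j(u₁,…,u_n) = s_j for all j, then pᵢ(uᵢ) = 0 (with s_j substituted). -/

import Mathlib

set_option linter.unusedSectionVars false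
set_option maxHeartbeats 1000000
open MvPolynomial
variable {σ τ : Type*} [Fintype σ] [DecidableEq σ] [Fintype τ] [DecidableEq τ]

lemma sum_range_whc (w : σ → ℕ) (φ : MvPolynomial σ ℂ) {T : ℕ}
    (hT : weightedTotalDegree w φ ≤ T) :
    ∑ c ∈ Finset.range (T + 1), weightedHomogeneousComponent w c φ = φ := by
  ext e
  rw [coeff_sum]
  simp only [coeff_weightedHomogeneousComponent]
  by_cases h : coeff e φ = 0
  · simp [h]
  · have he : Finsupp.weight w e ≤ T :=
      le_trans (le_weightedTotalDegree w (mem_support_iff.mpr h)) hT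
    rw [Finset.sum_eq_single (Finsupp.weight w e : ℕ)]
    · simp
    · intro b _ hb; simp [Ne.symm hb]
    · intro hmem; exact absurd (Finset.mem_range.mpr (Nat.lt_succ_of_le he)) hmem

lemma weight_eq_sum (w : σ → ℕ) (e : σ →₀ ℕ) :
    Finsupp.weight w e = ∑ i, e i * w i := by
  rw [Finsupp.weight_apply, Finsupp.sum_fintype]
  · simp [mul_comm, smul_eq_mul]
  · intro i; simp

lemma eval_scale {w : σ → ℕ} {φ : MvPolynomial σ ℂ} {m : ℕ}
    (h : IsWeightedHomogeneous w φ m) (l : ℂ) (x : σ → ℂ) :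
    eval (fun i => l ^ w i * x i) φ = l ^ m * eval x φ := by
  rw [eval_eq', eval_eq', Finset.mul_sum]
  apply Finset.sum_congr rfl
  intro e he
  have hw : Finsupp.weight w e = m := h (mem_support_iff.mp he)
  have hsum : ∑ i, e i * w i = m := by rw [← weight_eq_sum w e, hw]
  calc coeff e φ * ∏ i, (l ^ w i * x i) ^ e i
      = coeff e φ * ∏ i, (l ^ (e i * w i) * x i ^ e i) := by
        congr 1; apply Finset.prod_congr rfl; intro i _
        rw [mul_pow, ← pow_mul, mul_comm (w i)]
    _ = l ^ m * (coeff e φ * ∏ i, x i ^ e i) := by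
        rw [Finset.prod_mul_distrib, Finset.prod_pow_eq_pow_sum, hsum]; ring

/-- A polynomial satisfying the scaling identity is weighted homogeneous. -/
lemma isWH_of_scaling {w : σ → ℕ} {W : MvPolynomial σ ℂ} {d : ℕ}
    (hW : ∀ l : ℂ, l ≠ 0 → ∀ x : σ → ℂ,
      eval (fun i => l ^ w i * x i) W = l ^ d * eval x W) :
    IsWeightedHomogeneous w W d := by
  set T := weightedTotalDegree w W with hT
  -- each component with c ≠ d is zero
  have key : ∀ c, c ≠ d → weightedHomogeneousComponent w c W = 0 := by
    intro c hc
    apply MvPolynomial.funext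
    intro x
    rw [map_zero]
    -- polynomial in l
    set P : Polynomial ℂ :=
      (∑ b ∈ Finset.range (T + 1),
        Polynomial.C (eval x (weightedHomogeneousComponent w b W)) * Polynomial.X ^ b)
      - Polynomial.C (eval x W) * Polynomial.X ^ d with hP
    have hroots : ∀ l : ℂ, l ≠ 0 → P.eval l = 0 := by
      intro l hl
      have h1 : eval (fun i => l ^ w i * x i) W = l ^ d * eval x W := hW l hl x
      have h2 : eval (fun i => l ^ w i * x i) W
          = ∑ b ∈ Finset.range (T + 1),
              l ^ b * eval x (weightedHomogeneousComponent w b W) := by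
        conv_lhs => rw [← sum_range_whc w W le_rfl]
        rw [map_sum]
        exact Finset.sum_congr rfl fun b _ =>
          eval_scale (weightedHomogeneousComponent_isWeightedHomogeneous b W) l x
      simp only [hP, Polynomial.eval_sub, Polynomial.eval_finset_sum, Polynomial.eval_mul,
        Polynomial.eval_C, Polynomial.eval_pow, Polynomial.eval_X]
      rw [h2] at h1
      have h3 : ∑ b ∈ Finset.range (T + 1),
          eval x (weightedHomogeneousComponent w b W) * l ^ b
          = ∑ b ∈ Finset.range (T + 1),
            l ^ b * eval x (weightedHomogeneousComponent w b W) :=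
        Finset.sum_congr rfl fun b _ => mul_comm _ _
      rw [h3, h1]; ring
    have hP0 : P = 0 := by
      have : Set.Infinite {l : ℂ | P.eval l = 0} := by
        apply Set.Infinite.mono (s := {l : ℂ | l ≠ 0})
        · intro l hl; exact hroots l hl
        · exact Set.infinite_of_injective_forall_mem (f := fun n : ℕ => (n+1 : ℂ))
            (by intro a b h; simpa using h)
            (by intro n; simp only [Set.mem_setOf_eq]
                have : ((n+1:ℕ):ℂ) ≠ 0 := Nat.cast_ne_zero.mpr n.succ_ne_zero
                simpa using this)
      by_contra h
      exact this (Polynomial.finite_setOf_isRoot h)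
    have := congrArg (Polynomial.coeff · c) hP0
    simp only [hP, Polynomial.coeff_sub, Polynomial.finset_sum_coeff,
      Polynomial.coeff_C_mul, Polynomial.coeff_X_pow, Polynomial.coeff_zero] at this
    by_cases hcT : c ≤ T
    · rw [Finset.sum_eq_single c] at this
      · simpa [hc, Ne.symm] using this
      · intro b _ hb; rw [if_neg (Ne.symm hb), mul_zero]
      · intro hmem; exact absurd (Finset.mem_range.mpr (Nat.lt_succ_of_le hcT)) hmem
    · push_neg at hcT
      rw [weightedHomogeneousComponent_eq_zero (w := w) (φ := W) (n := c) hcT, map_zero]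
  -- conclude
  intro e he
  by_contra hne
  have h1 : coeff e (weightedHomogeneousComponent w (Finsupp.weight w e) W) = coeff e W := by
    rw [coeff_weightedHomogeneousComponent, if_pos rfl]
  rw [key _ hne] at h1
  simp at h1
  exact he h1.symm

lemma isWH_pderiv {w : σ → ℕ} {W : MvPolynomial σ ℂ} {d : ℕ}
    (hW : IsWeightedHomogeneous w W d) (j : σ) :
    IsWeightedHomogeneous w (pderiv j W) (d - w j) := by
  have : pderiv j W = ∑ e ∈ W.support, pderiv j (monomial e (coeff e W)) := by
    rw [← map_sum, ← MvPolynomial.as_sum W]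
  rw [this]
  apply IsWeightedHomogeneous.sum
  intro e he
  rw [pderiv_monomial]
  by_cases hej : e j = 0
  · simp only [hej, Nat.cast_zero, mul_zero, monomial_zero]
    exact isWeightedHomogeneous_zero _ _ _
  · apply isWeightedHomogeneous_monomial
    have hwe : Finsupp.weight w e = d := hW (mem_support_iff.mp he)
    have hle : Finsupp.single j 1 ≤ e := by
      rw [Finsupp.single_le_iff]; omega
    have : (e - Finsupp.single j 1) + Finsupp.single j 1 = e := tsub_add_cancel_of_le hle
    have hw2 : Finsupp.weight w (e - Finsupp.single j 1) + w j = d := by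
      have := congrArg (Finsupp.weight w) this
      rw [map_add] at this
      have hs : Finsupp.weight w (Finsupp.single j 1) = w j := by
        rw [Finsupp.weight_apply, Finsupp.sum_single_index] <;> simp
      rw [hs] at this
      simpa using this.trans hwe
    omega

lemma isWH_pow {w : σ → ℕ} {φ : MvPolynomial σ ℂ} {m : ℕ}
    (h : IsWeightedHomogeneous w φ m) (e : ℕ) :
    IsWeightedHomogeneous w (φ ^ e) (e * m) := by
  induction e with
  | zero => simpa using isWeightedHomogeneous_one (R := ℂ) w
  | succ e ih =>
    have := ih.mul h
    rw [pow_succ]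
    convert this using 1
    ring

lemma isWH_aeval {w : σ → ℕ} {w' : τ → ℕ} {f : τ → MvPolynomial σ ℂ}
    (hf : ∀ j, IsWeightedHomogeneous w (f j) (w' j))
    {g : MvPolynomial τ ℂ} {b : ℕ} (hg : IsWeightedHomogeneous w' g b) :
    IsWeightedHomogeneous w (aeval f g) b := by
  have hrepr : aeval f g = ∑ e ∈ g.support, C (coeff e g) * ∏ i, f i ^ e i := by
    rw [aeval_def, eval₂_eq']
    rfl
  rw [hrepr]
  apply IsWeightedHomogeneous.sum
  intro e he
  have hwe : Finsupp.weight w' e = b := hg (mem_support_iff.mp he)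
  have : IsWeightedHomogeneous w (∏ i, f i ^ e i) (∑ i, e i * w' i) := by
    apply IsWeightedHomogeneous.prod
    intro i _
    exact isWH_pow (hf i) (e i)
  have hb : (∑ i, e i * w' i) = b := by rw [← weight_eq_sum w' e, hwe]
  rw [hb] at this
  simpa using (isWeightedHomogeneous_C w (coeff e g)).mul this

lemma whC_mul_homogeneous {w : σ → ℕ} {w' : τ → ℕ}
    (Φ : MvPolynomial τ ℂ →ₗ[ℂ] MvPolynomial σ ℂ)
    (hΦ : ∀ b : ℕ, ∀ g : MvPolynomial τ ℂ,
      IsWeightedHomogeneous w' g b → IsWeightedHomogeneous w (Φ g) b)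
    {F : MvPolynomial σ ℂ} {a t : ℕ}
    (hF : IsWeightedHomogeneous w F a) (hat : a ≤ t) (g : MvPolynomial τ ℂ) :
    weightedHomogeneousComponent w t (Φ g * F)
      = Φ (weightedHomogeneousComponent w' (t - a) g) * F := by
  set T := weightedTotalDegree w' g with hT
  have hg : g = ∑ b ∈ Finset.range (T + 1), weightedHomogeneousComponent w' b g :=
    (sum_range_whc w' g le_rfl).symm
  have expand : Φ g * F
      = ∑ b ∈ Finset.range (T + 1), Φ (weightedHomogeneousComponent w' b g) * F := by
    conv_lhs => rw [hg]
    rw [map_sum, Finset.sum_mul]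
  rw [expand, map_sum]
  have hterm : ∀ b ∈ Finset.range (T + 1),
      weightedHomogeneousComponent w t (Φ (weightedHomogeneousComponent w' b g) * F)
        = if b = t - a then Φ (weightedHomogeneousComponent w' b g) * F else 0 := by
    intro b _
    have hhom : IsWeightedHomogeneous w (Φ (weightedHomogeneousComponent w' b g) * F) (b + a) :=
      (hΦ b _ (weightedHomogeneousComponent_isWeightedHomogeneous b g)).mul hF
    by_cases hb : b = t - a
    · rw [if_pos hb]
      have : b + a = t := by omega
      rw [← this]
      exact hhom.weightedHomogeneousComponent_same
    · rw [if_neg hb]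
      exact hhom.weightedHomogeneousComponent_ne t (by omega)
  rw [Finset.sum_congr rfl hterm, Finset.sum_ite_eq' (Finset.range (T + 1))]
  by_cases hmem : t - a ∈ Finset.range (T + 1)
  · rw [if_pos hmem]
  · rw [if_neg hmem]
    have : T < t - a := by simp at hmem; omega
    rw [weightedHomogeneousComponent_eq_zero (w := w') (φ := g) (n := t - a) this,
      map_zero, zero_mul]
lemma module_finite (n d : ℕ) (k : Fin n → ℕ) (hk : ∀ i, 0 < k i) (hkd : ∀ i, k i < d)
    (hd : 0 < d) (f : Fin n → MvPolynomial (Fin n) ℂ)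
    (hfh : ∀ j, IsWeightedHomogeneous k (f j) (d - k j))
    (N : ℕ) (hpow : ∀ i', (X i' : MvPolynomial (Fin n) ℂ) ^ N ∈ Ideal.span (Set.range f)) :
    Module.Finite (aeval (R := ℂ) f).range (MvPolynomial (Fin n) ℂ) := by
  set A := (aeval (R := ℂ) f).range with hA
  set M := n * (N - 1) + 1 with hM
  set B := d * M with hB
  set G : Set (MvPolynomial (Fin n) ℂ) :=
    (fun e => monomial e (1 : ℂ)) '' {e | Finsupp.weight k e < B} with hG
  set S : Submodule A (MvPolynomial (Fin n) ℂ) := Submodule.span A G with hS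
  -- C c ∈ A
  have hCA : ∀ c : ℂ, (C c : MvPolynomial (Fin n) ℂ) ∈ A := by
    intro c
    rw [← algebraMap_eq]
    exact Subalgebra.algebraMap_mem A c
  have hmono_c : ∀ (e : Fin n →₀ ℕ) (c : ℂ), monomial e (1 : ℂ) ∈ S → monomial e c ∈ S := by
    intro e c h1
    have := S.smul_mem (⟨C c, hCA c⟩ : A) h1
    rwa [Algebra.smul_def, show (algebraMap A (MvPolynomial (Fin n) ℂ)) ⟨C c, hCA c⟩ = C c
      from rfl, C_mul_monomial, mul_one] at this
  -- main induction
  have key : ∀ t : ℕ, ∀ e : Fin n →₀ ℕ, Finsupp.weight k e = t → monomial e (1 : ℂ) ∈ S := by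
    intro t
    induction t using Nat.strong_induction_on with
    | _ t IH =>
      intro e het
      by_cases hlt : Finsupp.weight k e < B
      · exact Submodule.subset_span ⟨e, hlt, rfl⟩
      push_neg at hlt
      -- big weight: find i with e i ≥ N
      have hdeg : M ≤ ∑ i', e i' := by
        have h1 : Finsupp.weight k e ≤ d * ∑ i', e i' := by
          rw [weight_eq_sum, Finset.mul_sum]
          apply Finset.sum_le_sum
          intro i' _
          calc e i' * k i' ≤ e i' * d := Nat.mul_le_mul_left _ (le_of_lt (hkd i'))
            _ = d * e i' := Nat.mul_comm _ _
        have := le_trans hlt h1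
        exact Nat.le_of_mul_le_mul_left this hd
      have hex : ∃ i', N ≤ e i' := by
        by_contra hco
        push_neg at hco
        have : ∑ i', e i' ≤ n * (N - 1) := by
          calc ∑ i', e i' ≤ ∑ _i' : Fin n, (N - 1) :=
                Finset.sum_le_sum (fun i' _ => by have := hco i'; omega)
            _ = n * (N - 1) := by simp [Finset.sum_const, Finset.card_univ, Nat.smul_one_eq_cast]
        omega
      obtain ⟨i', hi'⟩ := hex
      -- write monomial e 1 = monomial e' 1 * X i' ^ N
      set e' := e - Finsupp.single i' N with he'
      have hle : Finsupp.single i' N ≤ e := by rw [Finsupp.single_le_iff]; exact hi'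
      have hsplit : e' + Finsupp.single i' N = e := tsub_add_cancel_of_le hle
      obtain ⟨g, hg⟩ := Ideal.mem_span_range_iff_exists_fun.mp (hpow i')
      have heq : monomial e (1 : ℂ) = ∑ j, (monomial e' 1 * g j) * f j := by
        have : monomial e (1 : ℂ) = monomial e' 1 * (X i') ^ N := by
          rw [X_pow_eq_monomial, monomial_mul, hsplit, mul_one]
        rw [this, ← hg, Finset.mul_sum]
        exact Finset.sum_congr rfl fun j _ => (mul_assoc _ _ _).symm
      -- take homogeneous components
      have hBd : d ≤ B := by
        have : 1 ≤ M := Nat.le_add_left 1 _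
        calc d = d * 1 := (Nat.mul_one d).symm
          _ ≤ d * M := Nat.mul_le_mul_left d this
      have htB : B ≤ t := by omega
      have hcomp := congrArg (weightedHomogeneousComponent k t) heq
      rw [IsWeightedHomogeneous.weightedHomogeneousComponent_same
        (isWeightedHomogeneous_monomial k e 1 het), map_sum] at hcomp
      have hterm : ∀ j, weightedHomogeneousComponent k t ((monomial e' 1 * g j) * f j)
          = weightedHomogeneousComponent k (t - (d - k j)) (monomial e' 1 * g j) * f j := by
        intro j
        have := whC_mul_homogeneous (w := k) (w' := k) LinearMap.id (fun b g hg => hg)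
          (hfh j) (show d - k j ≤ t by omega) (monomial e' 1 * g j)
        rw [LinearMap.id_apply, LinearMap.id_apply] at this; exact this
      rw [Finset.sum_congr rfl (fun j _ => hterm j)] at hcomp
      -- each summand is in S
      rw [hcomp]
      apply Submodule.sum_mem
      intro j _
      set h := weightedHomogeneousComponent k (t - (d - k j)) (monomial e' 1 * g j) with hh
      have hhom : IsWeightedHomogeneous k h (t - (d - k j)) :=
        weightedHomogeneousComponent_isWeightedHomogeneous _ _
      have hdkj : 0 < d - k j := by have := hkd j; omega
      have hlt2 : t - (d - k j) < t := by omega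
      have hhS : h ∈ S := by
        rw [MvPolynomial.as_sum h]
        apply Submodule.sum_mem
        intro e'' he''
        apply hmono_c
        exact IH _ hlt2 e'' (hhom (mem_support_iff.mp he''))
      have hfA : f j ∈ A := ⟨X j, aeval_X f j⟩
      have := S.smul_mem (⟨f j, hfA⟩ : A) hhS
      rwa [Algebra.smul_def, show (algebraMap A (MvPolynomial (Fin n) ℂ)) ⟨f j, hfA⟩ = f j
        from rfl, mul_comm] at this
  -- S = ⊤
  have hStop : S = ⊤ := by
    rw [eq_top_iff]
    intro φ _
    rw [MvPolynomial.as_sum φ]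
    apply Submodule.sum_mem
    intro e _
    exact hmono_c e _ (key _ e rfl)
  -- G is finite
  have hGfin : G.Finite := by
    apply Set.Finite.image
    have : Finite {e : Fin n →₀ ℕ | Finsupp.weight k e < B} := by
      apply Finite.of_injective (β := Fin n → Fin B)
        (f := fun e i' => ⟨e.1 i', by
          have h1 : e.1 i' * 1 ≤ e.1 i' * k i' := Nat.mul_le_mul_left _ (hk i')
          have h2 : e.1 i' * k i' ≤ Finsupp.weight k e.1 := by
            rw [weight_eq_sum]
            exact Finset.single_le_sum (f := fun i => e.1 i * k i)
              (fun _ _ => Nat.zero_le _) (Finset.mem_univ i')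
          have := e.2
          simp only [Set.mem_setOf_eq] at this
          omega⟩)
      intro e1 e2 h12
      ext1
      apply Finsupp.ext
      intro i'
      have := congrFun h12 i'
      simpa using congrArg Fin.val this
    exact Set.toFinite _
  exact ⟨Submodule.fg_def.mpr ⟨G, hGfin, hStop⟩⟩
lemma eval_aeval' {n : ℕ} (u : Fin n → ℂ) (f : Fin n → MvPolynomial (Fin n) ℂ)
    (g : MvPolynomial (Fin n) ℂ) :
    eval u (aeval f g) = eval (fun j => eval u (f j)) g := by
  induction g using MvPolynomial.induction_on with
  | C c => simp
  | add p q hp hq => rw [map_add, map_add, hp, hq, map_add]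
  | mul_X p j hp => rw [map_mul, aeval_X, map_mul, hp, map_mul, eval_X]

lemma eval_map_sum {n N : ℕ} (c : ℕ → MvPolynomial (Fin n) ℂ)
    (φ : MvPolynomial (Fin n) ℂ →+* ℂ) (x : ℂ) :
    Polynomial.eval x ((∑ e ∈ Finset.range (N + 1),
        Polynomial.C (c e) * Polynomial.X ^ e).map φ)
      = ∑ e ∈ Finset.range (N + 1), φ (c e) * x ^ e := by
  rw [Polynomial.eval_map, Polynomial.eval₂_finset_sum]
  apply Finset.sum_congr rfl
  intro e _
  simp
/-- Elimination polynomial: for a non-degenerate quasi-homogeneous `W` with weights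
`qᵢ = kᵢ/d ∈ (0,1)` and each `i`, there is a nonzero polynomial
`pᵢ ∈ ℂ[s₁,…,s_n][xᵢ]`, quasi-homogeneous (with `xᵢ` of weight `qᵢ` and `sⱼ` of weight
`1 − qⱼ`) and with leading coefficient in `xᵢ` a nonzero constant, such that whenever
`∂W/∂xⱼ(u) = sⱼ` for all `j`, then `pᵢ(uᵢ) = 0` (with the `sⱼ` substituted). -/
theorem elimination_polynomial_exists (n d : ℕ) (hn : 0 < n) (hd : 0 < d)
    (k : Fin n → ℕ) (hk : ∀ i, 0 < k i) (hkd : ∀ i, k i < d)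
    (W : MvPolynomial (Fin n) ℂ)
    (hW : ∀ l : ℂ, l ≠ 0 → ∀ x : Fin n → ℂ,
      eval (fun i => l ^ k i * x i) W = l ^ d * eval x W)
    (hnd : ∀ u : Fin n → ℂ, (∀ j, eval u (pderiv j W) = 0) → u = 0)
    (i : Fin n) :
    ∃ p : Polynomial (MvPolynomial (Fin n) ℂ), ∃ c : ℂ, c ≠ 0 ∧
      p.leadingCoeff = MvPolynomial.C c ∧
      (∃ m : ℕ, ∀ l : ℂ, l ≠ 0 → ∀ (x : ℂ) (s : Fin n → ℂ),
        Polynomial.eval (l ^ k i * x)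
            (p.map (MvPolynomial.eval fun j => l ^ (d - k j) * s j))
          = l ^ m * Polynomial.eval x (p.map (MvPolynomial.eval s))) ∧
      ∀ u : Fin n → ℂ,
        Polynomial.eval (u i)
          (p.map (MvPolynomial.eval fun j => eval u (pderiv j W))) = 0 := by
  classical
  set f : Fin n → MvPolynomial (Fin n) ℂ := fun j => pderiv j W with hf
  have hWd : IsWeightedHomogeneous k W d := isWH_of_scaling hW
  have hfh : ∀ j, IsWeightedHomogeneous k (f j) (d - k j) := fun j => isWH_pderiv hWd j
  set I : Ideal (MvPolynomial (Fin n) ℂ) := Ideal.span (Set.range f) with hI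
  -- Nullstellensatz: some power of each variable lies in I
  have hrad : ∀ i' : Fin n, ∃ N : ℕ, (X i' : MvPolynomial (Fin n) ℂ) ^ N ∈ I := by
    intro i'
    have hmem : (X i' : MvPolynomial (Fin n) ℂ) ∈ I.radical := by
      rw [← vanishingIdeal_zeroLocus_eq_radical (K := ℂ)]
      rw [mem_vanishingIdeal_iff]
      intro x hx
      rw [mem_zeroLocus_iff] at hx
      have hx0 : x = 0 := hnd x (fun j => hx (f j) (Ideal.subset_span (Set.mem_range_self j)))
      rw [hx0, aeval_X]
      rfl
    exact hmem
  choose N0 hN0 using hrad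
  set N : ℕ := (Finset.univ.sup N0) + 1 with hN
  have hpowN : ∀ i', (X i' : MvPolynomial (Fin n) ℂ) ^ N ∈ I := by
    intro i'
    have h1 : N0 i' ≤ Finset.univ.sup N0 := Finset.le_sup (Finset.mem_univ i')
    have h2 : N = N0 i' + (N - N0 i') := by omega
    rw [h2, pow_add]
    exact Ideal.mul_mem_right _ _ (hN0 i')
  -- finiteness and integrality
  haveI hfin : Module.Finite (aeval (R := ℂ) f).range (MvPolynomial (Fin n) ℂ) :=
    module_finite n d k hk hkd hd f hfh N hpowN
  set A := (aeval (R := ℂ) f).range with hA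
  have hint : IsIntegral A (X i : MvPolynomial (Fin n) ℂ) := IsIntegral.of_finite A _
  obtain ⟨q, hqmonic, hq0⟩ := hint
  set N' := q.natDegree with hN'
  -- coefficient preimages
  have hcoefmem : ∀ e : ℕ, ∃ g : MvPolynomial (Fin n) ℂ,
      aeval f g = ((q.coeff e : A) : MvPolynomial (Fin n) ℂ) := by
    intro e
    exact (q.coeff e).2
  choose c' hc'0 using hcoefmem
  set c'' : ℕ → MvPolynomial (Fin n) ℂ := fun e => if e = N' then 1 else c' e with hc''def
  have hc''N' : c'' N' = 1 := if_pos rfl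
  have hc''e : ∀ e, e ≠ N' → c'' e = c' e := fun e he => if_neg he
  have hc'' : ∀ e, aeval f (c'' e) = ((q.coeff e : A) : MvPolynomial (Fin n) ℂ) := by
    intro e
    by_cases he : e = N'
    · subst he
      rw [hc''N', map_one, Polynomial.Monic.coeff_natDegree hqmonic]
      rfl
    · rw [hc''e e he]; exact hc'0 e
  -- the relation
  have hrel : ∑ e ∈ Finset.range (N' + 1), aeval f (c'' e) * (X i : MvPolynomial (Fin n) ℂ) ^ e
      = 0 := by
    have := hq0
    rw [Polynomial.eval₂_eq_sum_range] at this
    rw [← this]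
    apply Finset.sum_congr rfl
    intro e _
    rw [hc'']
    rfl
  -- homogenized coefficients
  set w' : Fin n → ℕ := fun j => d - k j with hw'
  set c₀ : ℕ → MvPolynomial (Fin n) ℂ :=
    fun e => weightedHomogeneousComponent w' ((N' - e) * k i) (c'' e) with hc₀
  have hc₀hom : ∀ e, IsWeightedHomogeneous w' (c₀ e) ((N' - e) * k i) :=
    fun e => weightedHomogeneousComponent_isWeightedHomogeneous _ _
  have hc₀N' : c₀ N' = 1 := by
    have h1 : c₀ N' = weightedHomogeneousComponent w' ((N' - N') * k i) (c'' N') := rfl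
    rw [h1, hc''N', Nat.sub_self, Nat.zero_mul]
    exact IsWeightedHomogeneous.weightedHomogeneousComponent_same
      (isWeightedHomogeneous_one ℂ w')
  set p : Polynomial (MvPolynomial (Fin n) ℂ) :=
    ∑ e ∈ Finset.range (N' + 1), Polynomial.C (c₀ e) * Polynomial.X ^ e with hp
  -- coefficients of p
  have hpcoeff : ∀ b, p.coeff b = if b ≤ N' then c₀ b else 0 := by
    intro b
    rw [hp, Polynomial.finset_sum_coeff]
    simp only [Polynomial.coeff_C_mul, Polynomial.coeff_X_pow]
    by_cases hb : b ≤ N'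
    · rw [Finset.sum_eq_single b]
      · rw [if_pos rfl, mul_one, if_pos hb]
      · intro e _ he
        rw [if_neg (fun h => he h.symm), mul_zero]
      · intro hb2
        exact absurd (Finset.mem_range.mpr (by omega)) hb2
    · rw [if_neg hb, Finset.sum_eq_zero]
      intro e hee
      rw [if_neg (by have := Finset.mem_range.mp hee; omega), mul_zero]
  have hpN' : p.coeff N' = 1 := by rw [hpcoeff, if_pos le_rfl, hc₀N']
  have hpdeg : p.natDegree = N' := by
    apply le_antisymm
    · apply Polynomial.natDegree_le_iff_coeff_eq_zero.mpr
      intro b hb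
      rw [hpcoeff, if_neg (by omega)]
    · apply Polynomial.le_natDegree_of_ne_zero
      rw [hpN']; exact one_ne_zero
  have hlead : p.leadingCoeff = MvPolynomial.C 1 := by
    rw [Polynomial.leadingCoeff, hpdeg, hpN', ← C_1]
  -- the homogenized relation
  have hrel₀ : ∑ e ∈ Finset.range (N' + 1),
      aeval f (c₀ e) * (X i : MvPolynomial (Fin n) ℂ) ^ e = 0 := by
    have happ := congrArg (weightedHomogeneousComponent k (N' * k i)) hrel
    rw [map_zero, map_sum] at happ
    rw [← happ]
    apply Finset.sum_congr rfl
    intro e he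
    have heN : e ≤ N' := by
      have := Finset.mem_range.mp he; omega
    have hXpow : IsWeightedHomogeneous k ((X i : MvPolynomial (Fin n) ℂ) ^ e) (e * k i) :=
      isWH_pow (isWeightedHomogeneous_X ℂ k i) e
    have := whC_mul_homogeneous (w := k) (w' := w') (aeval (R := ℂ) f).toLinearMap
      (fun b g hg => isWH_aeval hfh hg) hXpow
      (show e * k i ≤ N' * k i from Nat.mul_le_mul_right _ heN) (c'' e)
    rw [show ((aeval (R := ℂ) f).toLinearMap : MvPolynomial (Fin n) ℂ →ₗ[ℂ]
      MvPolynomial (Fin n) ℂ) (c'' e) = aeval f (c'' e) from rfl] at this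
    have h3 : N' * k i - e * k i = (N' - e) * k i := by
      rw [Nat.sub_mul]
    rw [this, h3]
    rfl
  refine ⟨p, 1, one_ne_zero, hlead, ⟨N' * k i, ?_⟩, ?_⟩
  · -- scaling
    intro l hl x s
    rw [hp, eval_map_sum, eval_map_sum, Finset.mul_sum]
    apply Finset.sum_congr rfl
    intro e he
    have heN : e ≤ N' := by have := Finset.mem_range.mp he; omega
    have hscale := eval_scale (hc₀hom e) l s
    rw [show (fun j => l ^ w' j * s j) = (fun j => l ^ (d - k j) * s j) from rfl] at hscale
    rw [hscale, mul_pow, ← pow_mul]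
    rw [show l ^ ((N' - e) * k i) * MvPolynomial.eval s (c₀ e) * (l ^ (k i * e) * x ^ e)
      = (l ^ ((N' - e) * k i) * l ^ (k i * e)) * (MvPolynomial.eval s (c₀ e) * x ^ e) from by
        ring]
    rw [← pow_add]
    rw [show (N' - e) * k i + k i * e = N' * k i from by
      have : e * k i ≤ N' * k i := Nat.mul_le_mul_right _ heN
      calc (N' - e) * k i + k i * e = (N' - e) * k i + e * k i := by ring
        _ = (N' - e + e) * k i := by ring
        _ = N' * k i := by congr 1; omega]
  · -- vanishing
    intro u
    have := congrArg (eval u) hrel₀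
    rw [map_zero, map_sum] at this
    rw [hp, eval_map_sum, ← this]
    apply Finset.sum_congr rfl
    intro e _
    rw [map_mul, eval_aeval', map_pow, eval_X]
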